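/- Let Z be a measurable space, D_h and D_0 probability measures on Z, and ℓ, u : Z × ℝ^d → ℝ. Suppose the maps L^h(θ) := ∫ ℓ(z, θ) dD_h(z) and L^0(θ) := ∫ ℓ(z, θ) dD_0(z) are twice continuously differentiable with ∇L^h(θ) = ∫ ∇_θ ℓ(z, θ) dD_h(z) and ∇L^0(θ) = ∫ ∇_θ ℓ(z, θ) dD_0(z), and that Ũ(θ) := ∫ u(z, θ) dD_h(z) is continuously differentiable with ∇Ũ(θ) = ∫ ∇_θ u(z, θ) dD_h(z). Let θ̂ : (0,1) → ℝ^d be differentiable and satisfy the equilibrium first-order condition α ∇L^h(θ̂(α)) + (1−α) ∇L^0(θ̂(α)) = 0 for all α ∈ (0,1), and suppose H(α) := α ∇²L^h(θ̂(α)) + (1−α) ∇²L^0(θ̂(α)) is invertible. Then U_α := Ũ(θ̂(α)) is differentiable with U_α' = −(1/(1−α)) ⟨∫ ∇_θ u(z, θ̂(α)) dD_h(z), H(α)^{-1} ∫ ∇_θ ℓ(z, θ̂(α)) dD_h(z)⟩. Consequently, U_α' > 0 if and only if Ψ(α) := ⟨∫ ∇_θ u(z, θ̂(α)) dD_h(z),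 H(α)^{-1} ∫ ∇_θ ℓ(z, θ̂(α)) dD_h(z)⟩ < 0. -/

import Mathlib

open MeasureTheory
open scoped RealInnerProductSpace

/-- **Proposition 5.1 (benefit of scaling up a strategy).** An `α`-fraction of the population
implements a fixed strategy inducing `Dh`, the rest is non-strategic with distribution `D0`;
`θ̂(α)` is the equilibrium model of the mixture risk. The collective utility `U_α = Ũ(θ̂(α))`
is differentiable with `U_α' = −(1/(1−α)) Ψ(α)`, where
`Ψ(α) = ⟨∫ ∇_θ u dDh, H(α)⁻¹ ∫ ∇_θ ℓ dDh⟩`; consequently `U_α' > 0 ↔ Ψ(α) < 0`. -/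
theorem benefit_of_scaling_up
    {Z : Type*} [MeasurableSpace Z] {d : ℕ}
    (Dh D0 : Measure Z)
    (hDh : IsProbabilityMeasure Dh) (hD0 : IsProbabilityMeasure D0)
    (ℓ u : Z → EuclideanSpace ℝ (Fin d) → ℝ)
    -- `L^h(θ) = ∫ ℓ(z, θ) dDh`, twice continuously differentiable, gradient interchange
    (Lh : EuclideanSpace ℝ (Fin d) → ℝ) (hLh : ∀ θ, Lh θ = ∫ z, ℓ z θ ∂Dh)
    (hLhC : ContDiff ℝ 2 Lh)
    (hLhgrad : ∀ θ, gradient Lh θ = ∫ z, gradient (ℓ z) θ ∂Dh)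
    -- `L^0(θ) = ∫ ℓ(z, θ) dD0`, twice continuously differentiable, gradient interchange
    (L0 : EuclideanSpace ℝ (Fin d) → ℝ) (hL0 : ∀ θ, L0 θ = ∫ z, ℓ z θ ∂D0)
    (hL0C : ContDiff ℝ 2 L0)
    (hL0grad : ∀ θ, gradient L0 θ = ∫ z, gradient (ℓ z) θ ∂D0)
    -- `Ũ(θ) = ∫ u(z, θ) dDh`, continuously differentiable, gradient interchange
    (Ut : EuclideanSpace ℝ (Fin d) → ℝ) (hUt : ∀ θ, Ut θ = ∫ z, u z θ ∂Dh)
    (hUtC : ContDiff ℝ 1 Ut)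
    (hUtgrad : ∀ θ, gradient Ut θ = ∫ z, gradient (u z) θ ∂Dh)
    -- the equilibrium model `θ̂(α)` on `(0,1)`: differentiable and first-order condition
    (θhat : ℝ → EuclideanSpace ℝ (Fin d))
    (hθhat : ∀ α ∈ Set.Ioo (0 : ℝ) 1, DifferentiableAt ℝ θhat α)
    (heq : ∀ α ∈ Set.Ioo (0 : ℝ) 1,
      α • gradient Lh (θhat α) + (1 - α) • gradient L0 (θhat α) = 0)
    -- the mixture Hessian `H(α) = α ∇²L^h(θ̂(α)) + (1−α) ∇²L^0(θ̂(α))` is invertible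
    (Hinv : ℝ → EuclideanSpace ℝ (Fin d) →L[ℝ] EuclideanSpace ℝ (Fin d))
    (hHinv : ∀ α ∈ Set.Ioo (0 : ℝ) 1,
      (Hinv α).comp
          (α • fderiv ℝ (gradient Lh) (θhat α) + (1 - α) • fderiv ℝ (gradient L0) (θhat α)) =
        ContinuousLinearMap.id ℝ (EuclideanSpace ℝ (Fin d)) ∧
      (α • fderiv ℝ (gradient Lh) (θhat α) +
          (1 - α) • fderiv ℝ (gradient L0) (θhat α)).comp (Hinv α) =
        ContinuousLinearMap.id ℝ (EuclideanSpace ℝ (Fin d))) :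
    ∀ α ∈ Set.Ioo (0 : ℝ) 1,
      -- `U_α` is differentiable with the stated derivative ...
      HasDerivAt (fun a => Ut (θhat a))
        (-(1 / (1 - α)) *
          ⟪∫ z, gradient (u z) (θhat α) ∂Dh, Hinv α (∫ z, gradient (ℓ z) (θhat α) ∂Dh)⟫) α ∧
      -- ... and consequently `U_α' > 0` if and only if `Ψ(α) < 0`
      (0 < deriv (fun a => Ut (θhat a)) α ↔
        ⟪∫ z, gradient (u z) (θhat α) ∂Dh, Hinv α (∫ z, gradient (ℓ z) (θhat α) ∂Dh)⟫ < 0) := by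
  intro α hα
  obtain ⟨hα0, hα1⟩ := hα
  have h1α : (0:ℝ) < 1 - α := by linarith
  have h1α' : (1:ℝ) - α ≠ 0 := ne_of_gt h1α
  set v := deriv θhat α with hvdef
  have hv : HasDerivAt θhat v α := (hθhat α ⟨hα0, hα1⟩).hasDerivAt
  have hgrad_diff : ∀ (L : EuclideanSpace ℝ (Fin d) → ℝ), ContDiff ℝ 2 L →
      DifferentiableAt ℝ (gradient L) (θhat α) := by
    intro L hL
    have hfd : ContDiff ℝ 1 (fderiv ℝ L) := hL.fderiv_right (by norm_num)
    have hgr : gradient L = fun x =>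
        (InnerProductSpace.toDual ℝ (EuclideanSpace ℝ (Fin d))).symm (fderiv ℝ L x) := rfl
    rw [hgr]
    exact ((InnerProductSpace.toDual ℝ (EuclideanSpace ℝ (Fin d))).symm.differentiable.differentiableAt).comp _
      (hfd.differentiable one_ne_zero _)
  set gh := gradient Lh (θhat α) with hghdef
  set g0 := gradient L0 (θhat α) with hg0def
  set DLh := fderiv ℝ (gradient Lh) (θhat α) with hDLhdef
  set DL0 := fderiv ℝ (gradient L0) (θhat α) with hDL0def
  have hLh' : HasDerivAt (fun a => gradient Lh (θhat a)) (DLh v) α :=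
    ((hgrad_diff Lh hLhC).hasFDerivAt).comp_hasDerivAt α hv
  have hL0' : HasDerivAt (fun a => gradient L0 (θhat a)) (DL0 v) α :=
    ((hgrad_diff L0 hL0C).hasFDerivAt).comp_hasDerivAt α hv
  have hφ := ((hasDerivAt_id α).smul hLh').add
      (((hasDerivAt_const α (1:ℝ)).sub (hasDerivAt_id α)).smul hL0')
  have hEq : (fun a => a • gradient Lh (θhat a) + (1 - a) • gradient L0 (θhat a))
      =ᶠ[nhds α] fun _ => (0 : EuclideanSpace ℝ (Fin d)) := by
    filter_upwards [isOpen_Ioo.mem_nhds (⟨hα0, hα1⟩ : α ∈ Set.Ioo (0:ℝ) 1)] with a ha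
    exact heq a ha
  have hzero : HasDerivAt (fun a => a • gradient Lh (θhat a) + (1 - a) • gradient L0 (θhat a))
      (0 : EuclideanSpace ℝ (Fin d)) α := (hasDerivAt_const α _).congr_of_eventuallyEq hEq
  have hD := hφ.unique hzero
  simp only [Pi.sub_apply, id_eq, one_smul, zero_sub, neg_one_smul] at hD
  have hfoc : α • gh + (1 - α) • g0 = 0 := heq α ⟨hα0, hα1⟩
  have h4 : α • DLh v + (1 - α) • DL0 v = g0 - gh := by
    linear_combination (norm := module) hD
  have hsc : (1 - α) * (-(1 / (1 - α))) = -1 := by field_simp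
  have h3 : g0 - gh = (-(1 / (1 - α))) • gh := by
    apply smul_right_injective (EuclideanSpace ℝ (Fin d)) h1α'
    show (1 - α) • (g0 - gh) = (1 - α) • (-(1 / (1 - α)) • gh)
    rw [smul_smul, hsc, neg_one_smul, smul_sub]
    linear_combination (norm := module) hfoc
  have hHv : (α • DLh + (1 - α) • DL0) v = (-(1 / (1 - α))) • gh := by
    rw [ContinuousLinearMap.add_apply, ContinuousLinearMap.smul_apply,
      ContinuousLinearMap.smul_apply]
    exact h4.trans h3
  have hvval : v = (-(1 / (1 - α))) • Hinv α gh := by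
    have h5 := congrArg (fun (T : EuclideanSpace ℝ (Fin d) →L[ℝ] EuclideanSpace ℝ (Fin d)) => T v)
      (hHinv α ⟨hα0, hα1⟩).1
    simp only [ContinuousLinearMap.comp_apply, ContinuousLinearMap.id_apply] at h5
    rw [← h5, hHv, (Hinv α).map_smul]
  have hUd : DifferentiableAt ℝ Ut (θhat α) := (hUtC.differentiable one_ne_zero) _
  have hU : HasDerivAt (fun a => Ut (θhat a)) (fderiv ℝ Ut (θhat α) v) α :=
    hUd.hasFDerivAt.comp_hasDerivAt α hv
  have hinner : fderiv ℝ Ut (θhat α) v = ⟪gradient Ut (θhat α), v⟫ := by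
    have hgr : gradient Ut (θhat α) =
        (InnerProductSpace.toDual ℝ (EuclideanSpace ℝ (Fin d))).symm (fderiv ℝ Ut (θhat α)) := rfl
    rw [hgr, InnerProductSpace.toDual_symm_apply]
  have hval : fderiv ℝ Ut (θhat α) v =
      -(1 / (1 - α)) *
        ⟪∫ z, gradient (u z) (θhat α) ∂Dh, Hinv α (∫ z, gradient (ℓ z) (θhat α) ∂Dh)⟫ := by
    rw [hinner, hvval, real_inner_smul_right, hUtgrad, ← hLhgrad]
  rw [hval] at hU
  refine ⟨hU, ?_⟩
  rw [hU.deriv]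
  set Ψ : ℝ := ⟪∫ z, gradient (u z) (θhat α) ∂Dh,
    Hinv α (∫ z, gradient (ℓ z) (θhat α) ∂Dh)⟫ with hΨ
  have hc : (0:ℝ) < 1 / (1 - α) := one_div_pos.mpr h1α
  constructor
  · intro h
    by_contra h'
    push_neg at h'
    have hle : -(1 / (1 - α)) * Ψ ≤ 0 :=
      mul_nonpos_of_nonpos_of_nonneg (by linarith) h'
    linarith
  · intro h
    exact mul_pos_of_neg_of_neg (by linarith) h
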